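/- arXiv:1411.3825 — 2 statements merged into one kernel-verified Lean document; each statement's English description precedes it below -/
import Mathlib

section
/- Let n and k be odd natural numbers with 0 ≤ k, l < n. Then there exists a simple graph on n vertices in which exactly n-1 vertices have degree k and exactly one vertex has degree l, if and only if l is even. -/
/-- The degree of vertex `v` in `g`. -/
noncomputable def dkDeg {n : ℕ} (g : SimpleGraph (Fin n)) (v : Fin n) : ℕ :=
  Nat.card (g.neighborSet v)

/-- `n_k(g)`: the number of vertices of `g` of degree `k`. -/
noncomputable def dkNk {n : ℕ} (g : SimpleGraph (Fin n)) (k : ℕ) : ℕ :=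
  Nat.card {v : Fin n // dkDeg g v = k}

/-! ### Auxiliary construction -/

/-- Connection set predicate for the near-circulant graph. -/
def dkConn (m r : ℕ) (x : ZMod m) : Prop :=
  (1 ≤ x.val ∧ x.val ≤ r) ∨ (m - r ≤ x.val) ∨ x.val = m / 2

/-- The matching to be removed among the first `l` vertices. -/
def dkMtch (m l : ℕ) (a b : ZMod m) : Prop :=
  (Even a.val ∧ a.val < l ∧ b = a + 1) ∨ (Even b.val ∧ b.val < l ∧ a = b + 1)

/-- The base relation. -/
def dkRel (m r l : ℕ) : Option (ZMod m) → Option (ZMod m) → Prop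
  | some a, some b => dkConn m r (a - b) ∧ ¬ dkMtch m l a b
  | some a, none => a.val < l
  | none, _ => False

/-- The auxiliary graph. -/
def dkG (m r l : ℕ) : SimpleGraph (Option (ZMod m)) := SimpleGraph.fromRel (dkRel m r l)

/-- Offset of the matched partner. -/
def dkEps (m : ℕ) (a : ZMod m) : ZMod m := if Even a.val then -1 else 1

section lemmas

variable {m r l : ℕ}

lemma dk_val_neg_one (hm2 : 2 ≤ m) : (-1 : ZMod m).val = m - 1 := by
  haveI : NeZero m := ⟨by omega⟩
  haveI : Fact (1 < m) := ⟨by omega⟩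
  rw [ZMod.neg_val, if_neg one_ne_zero, ZMod.val_one]

lemma dk_val_sub_one (hm2 : 2 ≤ m) (a : ZMod m) (h1 : 1 ≤ a.val) :
    (a - 1).val = a.val - 1 := by
  haveI : NeZero m := ⟨by omega⟩
  have hlt : a.val < m := ZMod.val_lt a
  have h : a - 1 = a + (-1) := by ring
  rw [h, ZMod.val_add, dk_val_neg_one hm2]
  have h2 : a.val + (m - 1) = (a.val - 1) + m := by omega
  rw [h2, Nat.add_mod_right, Nat.mod_eq_of_lt (by omega)]

lemma dk_val_add_one (hm2 : 2 ≤ m) (a : ZMod m) (h1 : a.val + 1 < m) :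
    (a + 1).val = a.val + 1 := by
  haveI : NeZero m := ⟨by omega⟩
  haveI : Fact (1 < m) := ⟨by omega⟩
  rw [ZMod.val_add, ZMod.val_one, Nat.mod_eq_of_lt h1]

lemma dkConn_not_zero (hm2 : 2 ≤ m) (h2r : 2 * r < m) : ¬ dkConn m r 0 := by
  haveI : NeZero m := ⟨by omega⟩
  simp only [dkConn, ZMod.val_zero]
  omega

lemma dkConn_neg (hme : Even m) (hm2 : 2 ≤ m) {x : ZMod m} (h : dkConn m r x) :
    dkConn m r (-x) := by
  haveI : NeZero m := ⟨by omega⟩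
  by_cases hx : x = 0
  · simpa [hx] using h
  · have hv : (-x).val = m - x.val := by
      rw [ZMod.neg_val, if_neg hx]
    have hx0 : x.val ≠ 0 := fun h0 => hx ((ZMod.val_eq_zero x).mp h0)
    have hxm : x.val < m := ZMod.val_lt x
    obtain ⟨t, ht⟩ := hme
    simp only [dkConn, hv] at h ⊢
    omega

lemma dkMtch_symm {a b : ZMod m} : dkMtch m l a b ↔ dkMtch m l b a := or_comm

lemma dkG_adj_some (hme : Even m) (hm2 : 2 ≤ m) {a b : ZMod m} :
    (dkG m r l).Adj (some a) (some b) ↔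
      a ≠ b ∧ dkConn m r (a - b) ∧ ¬ dkMtch m l a b := by
  constructor
  · rintro ⟨hne, h | h⟩
    · exact ⟨by simpa using hne, h.1, h.2⟩
    · refine ⟨by simpa using hne, ?_, ?_⟩
      · have := dkConn_neg hme hm2 h.1
        rwa [neg_sub] at this
      · rw [dkMtch_symm]; exact h.2
  · rintro ⟨hne, hc, hm'⟩
    exact ⟨by simpa using hne, Or.inl ⟨hc, hm'⟩⟩

lemma dkG_adj_some_none {a : ZMod m} :
    (dkG m r l).Adj (some a) none ↔ a.val < l := by
  constructor
  · rintro ⟨-, h | h⟩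
    · exact h
    · exact h.elim
  · intro h
    exact ⟨by simp, Or.inl h⟩

lemma dkG_adj_none_some {a : ZMod m} :
    (dkG m r l).Adj none (some a) ↔ a.val < l := by
  rw [(dkG m r l).adj_comm, dkG_adj_some_none]

/-- Characterization of matching in terms of offsets. -/
lemma dkMtch_iff (hme : Even m) (hm2 : 2 ≤ m) (hl : Even l) (hlm : l + 2 ≤ m)
    (a d : ZMod m) :
    dkMtch m l a (a - d) ↔ (a.val < l ∧ d = dkEps m a) := by
  haveI : NeZero m := ⟨by omega⟩
  constructor
  · rintro (⟨hev, hal, heq⟩ | ⟨hev, hbl, heq⟩)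
    · have hd : d = -1 := by linear_combination -heq
      exact ⟨hal, by rw [dkEps, if_pos hev, hd]⟩
    · have hd : d = 1 := by linear_combination heq
      subst hd
      have ha0 : a.val ≠ 0 := by
        intro h0
        have ha : a = 0 := (ZMod.val_eq_zero a).mp h0
        rw [ha, zero_sub, dk_val_neg_one hm2] at hbl
        omega
      have hv : (a - 1).val = a.val - 1 := dk_val_sub_one hm2 a (by omega)
      rw [hv] at hev hbl
      obtain ⟨c, hc⟩ := hl
      rw [Nat.even_iff] at hev
      have hodd : ¬ Even a.val := by rw [Nat.even_iff]; omega
      exact ⟨by omega, by rw [dkEps, if_neg hodd]⟩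
  · rintro ⟨hal, rfl⟩
    by_cases hev : Even a.val
    · left
      refine ⟨hev, hal, ?_⟩
      rw [dkEps, if_pos hev]; ring
    · right
      have ha1 : 1 ≤ a.val := by
        rcases Nat.eq_zero_or_pos a.val with h | h
        · exact absurd (by rw [h]; exact ⟨0, rfl⟩) hev
        · exact h
      have heq : a - dkEps m a = a - 1 := by rw [dkEps, if_neg hev]
      rw [heq, dk_val_sub_one hm2 a ha1]
      rw [Nat.even_iff] at hev ⊢
      refine ⟨by omega, by omega, by ring⟩

lemma dkConn_ncard (hme : Even m) (hm2 : 2 ≤ m) (h2r : 2 * r < m) :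
    {x : ZMod m | dkConn m r x}.ncard = 2 * r + 1 := by
  haveI : NeZero m := ⟨by omega⟩
  obtain ⟨t, ht⟩ := hme
  have hFsub : ∀ i ∈ (Finset.Ico 1 (r + 1) ∪ Finset.Ico (m - r) m) ∪ ({m / 2} : Finset ℕ),
      i < m := by
    intro i hi
    simp only [Finset.mem_union, Finset.mem_Ico, Finset.mem_singleton] at hi
    omega
  have hset : {x : ZMod m | dkConn m r x} = (fun i : ℕ => (i : ZMod m)) ''
      ↑((Finset.Ico 1 (r + 1) ∪ Finset.Ico (m - r) m) ∪ ({m / 2} : Finset ℕ)) := by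
    ext x
    simp only [Set.mem_setOf_eq, Set.mem_image, Finset.coe_union, Set.mem_union,
      Finset.coe_Ico, Set.mem_Ico, Finset.coe_singleton, Set.mem_singleton_iff]
    constructor
    · intro h
      refine ⟨x.val, ?_, ZMod.natCast_rightInverse x⟩
      have hxm : x.val < m := ZMod.val_lt x
      simp only [dkConn] at h
      omega
    · rintro ⟨i, hi, rfl⟩
      have him : i < m := by omega
      have hv : ((i : ZMod m)).val = i := ZMod.val_cast_of_lt him
      simp only [dkConn, hv]
      omega
  rw [hset, Set.ncard_image_of_injOn, Set.ncard_coe_finset]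
  · have hd1 : Disjoint (Finset.Ico 1 (r + 1)) (Finset.Ico (m - r) m) := by
      rw [Finset.disjoint_left]
      intro i hi hj
      simp only [Finset.mem_Ico] at hi hj
      omega
    have hd2 : Disjoint (Finset.Ico 1 (r + 1) ∪ Finset.Ico (m - r) m) ({m / 2} : Finset ℕ) := by
      rw [Finset.disjoint_right]
      intro i hi hj
      simp only [Finset.mem_union, Finset.mem_Ico] at hj
      simp only [Finset.mem_singleton] at hi
      omega
    rw [Finset.card_union_of_disjoint hd2, Finset.card_union_of_disjoint hd1,
      Nat.card_Ico, Nat.card_Ico, Finset.card_singleton]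
    omega
  · intro i hi j hj hij
    have := congrArg ZMod.val hij
    rwa [ZMod.val_cast_of_lt (hFsub i hi), ZMod.val_cast_of_lt (hFsub j hj)] at this

lemma dkEps_conn (hm2 : 2 ≤ m) (hr1 : 1 ≤ r) (h2r : 2 * r < m) (a : ZMod m) :
    dkConn m r (dkEps m a) := by
  haveI : NeZero m := ⟨by omega⟩
  haveI : Fact (1 < m) := ⟨by omega⟩
  by_cases hev : Even a.val
  · rw [dkEps, if_pos hev]
    have : ((-1 : ZMod m)).val = m - 1 := dk_val_neg_one hm2
    simp only [dkConn, this]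
    omega
  · rw [dkEps, if_neg hev]
    simp only [dkConn, ZMod.val_one]
    omega

/-- degree of an "inner" vertex is `2r+1`. -/
lemma dk_deg_some (hme : Even m) (hm2 : 2 ≤ m) (h2r : 2 * r < m) (hl : Even l)
    (hl2r : l ≤ 2 * r) (a : ZMod m) :
    Nat.card ((dkG m r l).neighborSet (some a)) = 2 * r + 1 := by
  haveI : NeZero m := ⟨by omega⟩
  obtain ⟨t, ht⟩ := hme
  have hme : Even m := ⟨t, ht⟩
  have hlm : l + 2 ≤ m := by
    obtain ⟨c, hc⟩ := hl
    omega
  by_cases hal : a.val < l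
  · -- matched vertex: lost an edge, gained `none`
    have hl2 : 2 ≤ l := by
      obtain ⟨c, hc⟩ := hl; omega
    have hr1 : 1 ≤ r := by omega
    have heps : dkConn m r (dkEps m a) := dkEps_conn hm2 hr1 h2r a
    have hset : (dkG m r l).neighborSet (some a) =
        insert none (some '' ((fun d => a - d) '' ({x : ZMod m | dkConn m r x} \ {dkEps m a}))) := by
      ext x
      cases x with
      | none =>
          simp only [SimpleGraph.mem_neighborSet, dkG_adj_some_none, Set.mem_insert_iff]
          simp [hal]
      | some b =>
          simp only [SimpleGraph.mem_neighborSet, dkG_adj_some hme hm2, Set.mem_insert_iff,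
            Set.mem_image, Set.mem_diff, Set.mem_setOf_eq, Set.mem_singleton_iff]
          constructor
          · rintro ⟨hne, hc, hnm⟩
            refine Or.inr ⟨b, ⟨a - b, ⟨hc, ?_⟩, by ring⟩, rfl⟩
            intro hbe
            exact hnm ((dkMtch_iff hme hm2 hl hlm a (a - b)).mpr ⟨hal, hbe⟩
              |>.imp (fun h => by rwa [show a - (a - b) = b by ring] at h)
              (fun h => by rwa [show a - (a - b) = b by ring] at h))
          · rintro (h | ⟨b', ⟨d, ⟨hd, hde⟩, rfl⟩, hb⟩)
            · exact absurd h (by simp)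
            · obtain ⟨rfl⟩ : a - d = b := by injection hb
              have hd0 : d ≠ 0 := fun h0 => dkConn_not_zero hm2 h2r (h0 ▸ hd)
              refine ⟨?_, by rwa [show a - (a - d) = d by ring], ?_⟩
              · intro h
                exact hd0 (by linear_combination h)
              · intro hmm
                exact hde ((dkMtch_iff hme hm2 hl hlm a d).mp hmm).2
    rw [hset, Nat.card_coe_set_eq,
      Set.ncard_insert_of_notMem (by simp),
      Set.ncard_image_of_injective _ (Option.some_injective _),
      Set.ncard_image_of_injective _ sub_right_injective,
      Set.ncard_diff_singleton_of_mem (show dkEps m a ∈ {x : ZMod m | dkConn m r x} from heps),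
      dkConn_ncard hme hm2 h2r]
    omega
  · -- unmatched vertex
    have hset : (dkG m r l).neighborSet (some a) =
        some '' ((fun d => a - d) '' {x : ZMod m | dkConn m r x}) := by
      ext x
      cases x with
      | none =>
          simp only [SimpleGraph.mem_neighborSet, dkG_adj_some_none]
          simp [hal]
      | some b =>
          simp only [SimpleGraph.mem_neighborSet, dkG_adj_some hme hm2,
            Set.mem_image, Set.mem_setOf_eq]
          constructor
          · rintro ⟨hne, hc, -⟩
            exact ⟨b, ⟨a - b, hc, by ring⟩, rfl⟩
          · rintro ⟨b', ⟨d, hd, rfl⟩, hb⟩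
            obtain ⟨rfl⟩ : a - d = b := by injection hb
            have hd0 : d ≠ 0 := fun h0 => dkConn_not_zero hm2 h2r (h0 ▸ hd)
            refine ⟨?_, by rwa [show a - (a - d) = d by ring], ?_⟩
            · intro h
              exact hd0 (by linear_combination h)
            · intro hmm
              exact hal ((dkMtch_iff hme hm2 hl hlm a d).mp hmm).1
    rw [hset, Nat.card_coe_set_eq,
      Set.ncard_image_of_injective _ (Option.some_injective _),
      Set.ncard_image_of_injective _ sub_right_injective,
      dkConn_ncard hme hm2 h2r]

/-- degree of the special vertex is `l`. -/
lemma dk_deg_none (hm2 : 2 ≤ m) (hlm : l ≤ m) :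
    Nat.card ((dkG m r l).neighborSet none) = l := by
  haveI : NeZero m := ⟨by omega⟩
  have hset : (dkG m r l).neighborSet none =
      some '' ((fun i : ℕ => (i : ZMod m)) '' Set.Iio l) := by
    ext x
    cases x with
    | none =>
        simp only [SimpleGraph.mem_neighborSet]
        simp [(dkG m r l).irrefl]
    | some a =>
        simp only [SimpleGraph.mem_neighborSet, dkG_adj_none_some, Set.mem_image,
          Set.mem_Iio]
        constructor
        · intro h
          exact ⟨a, ⟨a.val, h, ZMod.natCast_rightInverse a⟩, rfl⟩
        · rintro ⟨a', ⟨i, hi, rfl⟩, ha⟩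
          obtain ⟨rfl⟩ : ((i : ZMod m)) = a := by injection ha
          rwa [ZMod.val_cast_of_lt (by omega)]
  rw [hset, Nat.card_coe_set_eq,
    Set.ncard_image_of_injective _ (Option.some_injective _),
    Set.ncard_image_of_injOn]
  · rw [show Set.Iio l = ↑(Finset.range l) by ext; simp, Set.ncard_coe_finset,
      Finset.card_range]
  · intro i hi j hj hij
    simp only [Set.mem_Iio] at hi hj
    have := congrArg ZMod.val hij
    rwa [ZMod.val_cast_of_lt (by omega), ZMod.val_cast_of_lt (by omega)] at this

end lemmas

/-- Existence of the auxiliary graph on `Option (ZMod m)`. -/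
lemma dk_exists_option (m k l : ℕ) (hme : Even m) (hm2 : 2 ≤ m) (hk : Odd k)
    (hkm : k < m) (hl : Even l) (hlk : l < k) :
    ∃ g : SimpleGraph (Option (ZMod m)),
      (∀ a : ZMod m, Nat.card (g.neighborSet (some a)) = k) ∧
        Nat.card (g.neighborSet none) = l := by
  obtain ⟨r, rfl⟩ : ∃ r, k = 2 * r + 1 := by
    obtain ⟨r, hr⟩ := hk; exact ⟨r, by omega⟩
  exact ⟨dkG m r l,
    fun a => dk_deg_some hme hm2 (by omega) hl (by omega) a,
    dk_deg_none hm2 (by omega)⟩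

/-- Transfer a graph on `Option (ZMod m)` with given degrees to `Fin n`. -/
lemma dk_transfer (n m k l : ℕ) (hnm : n = m + 1) (hm2 : 2 ≤ m) (hkl : k ≠ l)
    (g : SimpleGraph (Option (ZMod m)))
    (hgk : ∀ a : ZMod m, Nat.card (g.neighborSet (some a)) = k)
    (hgl : Nat.card (g.neighborSet none) = l) :
    ∃ G : SimpleGraph (Fin n), dkNk G k = n - 1 ∧ dkNk G l = 1 := by
  haveI : NeZero m := ⟨by omega⟩
  have ecard : Fintype.card (Fin n) = Fintype.card (Option (ZMod m)) := by
    simp [ZMod.card, hnm]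
  let e : Fin n ≃ Option (ZMod m) := Fintype.equivOfCardEq ecard
  have hdeg : ∀ v : Fin n, dkDeg (g.comap ⇑e) v = Nat.card (g.neighborSet (e v)) := by
    intro v
    have hset : (g.comap ⇑e).neighborSet v = ⇑e ⁻¹' (g.neighborSet (e v)) := by
      ext w
      simp [SimpleGraph.mem_neighborSet]
    have himg : ⇑e.symm '' (g.neighborSet (e v)) = ⇑e ⁻¹' (g.neighborSet (e v)) := by
      rw [Equiv.image_eq_preimage_symm, Equiv.symm_symm]
    rw [dkDeg, hset, ← himg, Nat.card_coe_set_eq,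
      Set.ncard_image_of_injective _ e.symm.injective, ← Nat.card_coe_set_eq]
  refine ⟨g.comap ⇑e, ?_, ?_⟩
  · have h1 : dkNk (g.comap ⇑e) k
        = Nat.card {w : Option (ZMod m) // Nat.card (g.neighborSet w) = k} :=
      Nat.card_congr (Equiv.subtypeEquiv e (fun v => by rw [hdeg v]))
    have h2 : ∀ w : Option (ZMod m),
        Nat.card (g.neighborSet w) = k ↔ w.isSome = true := by
      intro w
      cases w with
      | none =>
          rw [hgl]
          simp only [Option.isSome_none, Bool.false_eq_true, iff_false]
          exact fun h => hkl h.symm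
      | some a =>
          rw [hgk a]
          simp
    have h3 : Nat.card {w : Option (ZMod m) // Nat.card (g.neighborSet w) = k}
        = Nat.card (ZMod m) :=
      Nat.card_congr ((Equiv.subtypeEquivRight h2).trans (Equiv.optionIsSomeEquiv _))
    rw [h1, h3, Nat.card_zmod]
    omega
  · have h1 : dkNk (g.comap ⇑e) l
        = Nat.card {w : Option (ZMod m) // Nat.card (g.neighborSet w) = l} :=
      Nat.card_congr (Equiv.subtypeEquiv e (fun v => by rw [hdeg v]))
    have h2 : ∀ w : Option (ZMod m),
        Nat.card (g.neighborSet w) = l ↔ w = none := by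
      intro w
      cases w with
      | none => simp [hgl]
      | some a =>
          rw [hgk a]
          simp only [reduceCtorEq, iff_false]
          exact hkl
    have h3 : Nat.card {w : Option (ZMod m) // Nat.card (g.neighborSet w) = l} = 1 := by
      rw [Nat.card_congr (Equiv.subtypeEquivRight h2)]
      rw [Nat.card_eq_one_iff_unique]
      exact ⟨⟨fun x y => Subtype.ext (x.2.trans y.2.symm)⟩, ⟨⟨none, rfl⟩⟩⟩
    rw [h1, h3]

/-- Degrees of a graph and counts, in terms of `degree`. -/
lemma dk_deg_eq_degree {n : ℕ} (g : SimpleGraph (Fin n)) [DecidableRel g.Adj] (v : Fin n) :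
    dkDeg g v = g.degree v := by
  rw [dkDeg, ← SimpleGraph.card_neighborSet_eq_degree, Nat.card_eq_fintype_card]

/-- Complementation swaps degree counts. -/
lemma dk_compl {n : ℕ} (G : SimpleGraph (Fin n)) (j : ℕ) (hj : j ≤ n - 1) :
    dkNk Gᶜ j = dkNk G (n - 1 - j) := by
  classical
  rw [dkNk, dkNk]
  apply Nat.card_congr
  apply Equiv.subtypeEquivRight
  intro v
  rw [dk_deg_eq_degree, dk_deg_eq_degree, SimpleGraph.degree_compl]
  have hle := SimpleGraph.degree_lt_card_verts (G := G) v
  rw [Fintype.card_fin] at *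
  constructor <;> intro h <;> omega

/-- Forward direction: existence implies `l` even. -/
lemma dk_forward (n k l : ℕ) (hn : Odd n) (hkl : k ≠ l)
    (g : SimpleGraph (Fin n)) (h1 : dkNk g k = n - 1) (h2 : dkNk g l = 1) : Even l := by
  classical
  have hnk : ∀ j, dkNk g j = (Finset.univ.filter fun v => g.degree v = j).card := by
    intro j
    rw [dkNk, Nat.card_eq_fintype_card, Fintype.card_subtype]
    apply Finset.card_bij (fun v _ => v) <;> intros <;>
      simp_all [dk_deg_eq_degree]
  rw [hnk] at h1 h2
  set A := Finset.univ.filter fun v => g.degree v = k with hA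
  set B := Finset.univ.filter fun v => g.degree v = l with hB
  have hdisj : Disjoint A B := by
    rw [Finset.disjoint_left]
    intro v hv hv'
    rw [hA, Finset.mem_filter] at hv
    rw [hB, Finset.mem_filter] at hv'
    exact hkl (hv.2 ▸ hv'.2 ▸ rfl)
  have hn1 : 1 ≤ n := by rcases hn with ⟨t, ht⟩; omega
  have huniv : A ∪ B = Finset.univ := by
    apply Finset.eq_univ_of_card
    rw [Finset.card_union_of_disjoint hdisj, h1, h2, Fintype.card_fin]
    omega
  have hsum : ∑ v, g.degree v = (n - 1) * k + 1 * l := by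
    rw [← huniv, Finset.sum_union hdisj]
    congr 1
    · rw [Finset.sum_congr rfl (fun v hv => (Finset.mem_filter.mp hv).2),
        Finset.sum_const, h1, smul_eq_mul]
    · rw [Finset.sum_congr rfl (fun v hv => (Finset.mem_filter.mp hv).2),
        Finset.sum_const, h2, smul_eq_mul]
  have heven : Even (∑ v, g.degree v) := by
    rw [SimpleGraph.sum_degrees_eq_twice_card_edges]
    exact even_two_mul _
  rw [hsum] at heven
  have he1 : Even ((n - 1) * k) := by
    refine Even.mul_right ?_ k
    rcases hn with ⟨t, ht⟩
    exact ⟨t, by omega⟩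
  have := (Nat.even_add.mp heven).mp he1
  rwa [one_mul] at this

/-- for `n`, `k` odd, `k ≠ l`, `k, l < n`, there exists a simple graph on
`n` vertices with exactly `n-1` vertices of degree `k` and one vertex of degree `l`
iff `l` is even. -/
theorem stmt3 (n k l : ℕ) (hn : Odd n) (hk : Odd k) (hkl : k ≠ l)
    (hkn : k < n) (hln : l < n) :
    (∃ g : SimpleGraph (Fin n), dkNk g k = n - 1 ∧ dkNk g l = 1) ↔ Even l := by
  constructor
  · rintro ⟨g, h1, h2⟩
    exact dk_forward n k l hn hkl g h1 h2
  · intro hl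
    obtain ⟨s, hs⟩ := hk
    obtain ⟨t, ht⟩ := hn
    have hn3 : 3 ≤ n := by omega
    have hnm : n = (n - 1) + 1 := by omega
    set m := n - 1 with hm
    have hme : Even m := ⟨t, by omega⟩
    have hm2 : 2 ≤ m := by omega
    obtain ⟨c, hc⟩ := hl
    rcases lt_or_gt_of_ne hkl with hklt | hkgt
    · -- k < l : use the complement construction
      have hkm : k ≤ m := by omega
      have hlm : l ≤ m := by omega
      obtain ⟨u, hu⟩ := id hme
      have hk' : Odd (m - k) := by rw [Nat.odd_iff]; omega
      have hl' : Even (m - l) := by rw [Nat.even_iff]; omega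
      obtain ⟨g, hg1, hg2⟩ := dk_exists_option m (m - k) (m - l) hme hm2 hk'
        (by omega) hl' (by omega)
      obtain ⟨G, hG1, hG2⟩ := dk_transfer n m (m - k) (m - l) hnm hm2 (by omega) g hg1 hg2
      refine ⟨Gᶜ, ?_, ?_⟩
      · rw [dk_compl G k (by omega), show n - 1 - k = m - k by omega]
        exact hG1
      · rw [dk_compl G l (by omega), show n - 1 - l = m - l by omega]
        exact hG2
    · -- l < k : direct construction
      have hkm : k < m := by
        obtain ⟨u, hu⟩ := id hme
        omega
      obtain ⟨g, hg1, hg2⟩ := dk_exists_option m k l hme hm2 ⟨s, hs⟩ hkm ⟨c, hc⟩ hkgt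
      exact dk_transfer n m k l hnm hm2 hkl g hg1 hg2
end

section
/- Let n be odd. Then the extreme points of the convex hull of the degree-count vectors { (n_0(g), …, n_{n-1}(g)) : g a simple graph on n vertices } are exactly: the vectors n·e_l for 0 ≤ l < n with l even, and the vectors (n-1)·e_k + e_l for 0 ≤ k, l < n with k odd and l even. -/
open Finset

/-- The degree-count vector of `g`, as a point of `ℝⁿ`. -/
noncomputable def dkVec {n : ℕ} (g : SimpleGraph (Fin n)) : Fin n → ℝ :=
  fun k => (dkNk g (k : ℕ) : ℝ)


variable {n : ℕ}

lemma dkDeg_eq_degree (g : SimpleGraph (Fin n)) [DecidableRel g.Adj] (v : Fin n) :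
    dkDeg g v = g.degree v := by
  rw [dkDeg, Nat.card_eq_fintype_card, SimpleGraph.card_neighborSet_eq_degree]

lemma dkNk_eq_card (g : SimpleGraph (Fin n)) (k : ℕ) :
    dkNk g k = #(univ.filter (fun v => dkDeg g v = k)) := by
  classical
  rw [dkNk, Nat.card_eq_fintype_card, Fintype.card_subtype]

lemma dkDeg_lt (hn : 0 < n) (g : SimpleGraph (Fin n)) (v : Fin n) : dkDeg g v < n := by
  classical
  rw [dkDeg_eq_degree]
  simpa using g.degree_lt_card_verts v

lemma sum_dkNk (hn : 0 < n) (g : SimpleGraph (Fin n)) : ∑ i : Fin n, dkNk g (i : ℕ) = n := by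
  classical
  have := Finset.card_eq_sum_card_fiberwise
    (f := fun v : Fin n => (⟨dkDeg g v, dkDeg_lt hn g v⟩ : Fin n))
    (s := univ) (t := univ) (fun x _ => mem_univ _)
  rw [card_univ, Fintype.card_fin] at this
  conv_rhs => rw [this]
  refine Finset.sum_congr rfl fun i _ => ?_
  rw [dkNk_eq_card]
  congr 1
  ext v
  simp [Fin.ext_iff]

lemma sum_dkNk_odd (hn : 0 < n) (g : SimpleGraph (Fin n)) :
    ∑ i ∈ univ.filter (fun i : Fin n => Odd (i : ℕ)), dkNk g (i : ℕ)
      = #(univ.filter fun v => Odd (dkDeg g v)) := by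
  classical
  have := Finset.card_eq_sum_card_fiberwise
    (f := fun v : Fin n => (⟨dkDeg g v, dkDeg_lt hn g v⟩ : Fin n))
    (s := univ.filter fun v => Odd (dkDeg g v))
    (t := univ.filter fun i : Fin n => Odd (i : ℕ))
    (fun x hx => by simp at hx ⊢; exact hx)
  rw [this]
  refine (Finset.sum_congr rfl fun i hi => ?_).symm
  simp only [mem_filter, mem_univ, true_and] at hi
  rw [dkNk_eq_card]
  congr 1
  ext v
  simp only [mem_filter, mem_univ, true_and, Fin.ext_iff]
  constructor
  · rintro ⟨-, h⟩; exact h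
  · intro h; exact ⟨by rw [h]; exact hi, h⟩

lemma even_sum_dkNk_odd (hn : 0 < n) (g : SimpleGraph (Fin n)) :
    Even (∑ i ∈ univ.filter (fun i : Fin n => Odd (i : ℕ)), dkNk g (i : ℕ)) := by
  classical
  rw [sum_dkNk_odd hn g]
  have := g.even_card_odd_degree_vertices
  convert this using 2
  ext v
  simp [dkDeg_eq_degree]

-- Section B : transport along an equiv
lemma dkDeg_comap {V : Type} (g : SimpleGraph V) (e : Fin n ≃ V) (v : Fin n) :
    dkDeg (SimpleGraph.comap (⇑e) g) v = Nat.card (g.neighborSet (e v)) := by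
  rw [dkDeg]
  exact Nat.card_congr (e.subtypeEquiv (fun b => by
    simp [SimpleGraph.mem_neighborSet, SimpleGraph.comap_adj]))

lemma dkNk_comap {V : Type} (g : SimpleGraph V) (e : Fin n ≃ V) (k : ℕ) :
    dkNk (SimpleGraph.comap (⇑e) g) k = Nat.card {w : V // Nat.card (g.neighborSet w) = k} := by
  rw [dkNk]
  exact Nat.card_congr (e.subtypeEquiv (fun v => by rw [dkDeg_comap]))


-- symmetric connection set {±1, ..., ±j} in ZMod N
def setF (N j : ℕ) : Finset (ZMod N) :=
  ((Finset.Icc 1 j).image (fun i : ℕ => (i : ZMod N))) ∪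
  ((Finset.Icc 1 j).image (fun i : ℕ => -(i : ZMod N)))

variable {N j : ℕ}

lemma mem_setF {d : ZMod N} :
    d ∈ setF N j ↔ (∃ i, 1 ≤ i ∧ i ≤ j ∧ (i : ZMod N) = d) ∨
      (∃ i, 1 ≤ i ∧ i ≤ j ∧ -(i : ZMod N) = d) := by
  simp [setF, Finset.mem_union, Finset.mem_image, Finset.mem_Icc, and_assoc]

lemma neg_mem_setF {d : ZMod N} (h : d ∈ setF N j) : -d ∈ setF N j := by
  rw [mem_setF] at h ⊢
  rcases h with ⟨i, h1, h2, h3⟩ | ⟨i, h1, h2, h3⟩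
  · exact Or.inr ⟨i, h1, h2, by rw [h3]⟩
  · exact Or.inl ⟨i, h1, h2, by rw [← h3, neg_neg]⟩

lemma natCast_eq_zero_iff (a : ℕ) : ((a : ZMod N) = 0) ↔ N ∣ a :=
  ZMod.natCast_eq_zero_iff a N

lemma zero_not_mem_setF (hj : 2 * j < N) : (0 : ZMod N) ∉ setF N j := by
  haveI : NeZero N := ⟨by omega⟩
  rw [mem_setF]
  rintro (⟨i, h1, h2, h3⟩ | ⟨i, h1, h2, h3⟩)
  · have := (natCast_eq_zero_iff (N := N) i).mp h3
    have := Nat.le_of_dvd (by omega) this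
    omega
  · have h4 : (i : ZMod N) = 0 := by rw [← neg_neg ((i : ZMod N)), h3, neg_zero]
    have := Nat.le_of_dvd (by omega) ((natCast_eq_zero_iff (N := N) i).mp h4)
    omega

lemma card_setF (hj : 2 * j < N) : (setF N j).card = 2 * j := by
  haveI : NeZero N := ⟨by omega⟩
  have hinj : ∀ a ∈ Finset.Icc 1 j, ∀ b ∈ Finset.Icc 1 j,
      (a : ZMod N) = (b : ZMod N) → a = b := by
    intro a ha b hb hab
    simp only [Finset.mem_Icc] at ha hb
    have h1 : ((a : ZMod N)).val = a := ZMod.val_cast_of_lt (by omega)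
    have h2 : ((b : ZMod N)).val = b := ZMod.val_cast_of_lt (by omega)
    rw [← h1, ← h2, hab]
  have hinj2 : ∀ a ∈ Finset.Icc 1 j, ∀ b ∈ Finset.Icc 1 j,
      -(a : ZMod N) = -(b : ZMod N) → a = b := by
    intro a ha b hb hab
    exact hinj a ha b hb (neg_injective hab)
  have hdisj : Disjoint ((Finset.Icc 1 j).image (fun i : ℕ => (i : ZMod N)))
      ((Finset.Icc 1 j).image (fun i : ℕ => -(i : ZMod N))) := by
    rw [Finset.disjoint_left]
    rintro c hc1 hc2
    simp only [Finset.mem_image, Finset.mem_Icc] at hc1 hc2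
    obtain ⟨a, ha, rfl⟩ := hc1
    obtain ⟨b, hb, hbe⟩ := hc2
    have : ((a + b : ℕ) : ZMod N) = 0 := by
      push_cast
      rw [← hbe]; ring
    have := Nat.le_of_dvd (by omega) ((natCast_eq_zero_iff (N := N) _).mp this)
    omega
  rw [setF, Finset.card_union_of_disjoint hdisj,
    Finset.card_image_of_injOn hinj, Finset.card_image_of_injOn hinj2,
    Nat.card_Icc]
  omega

lemma m_not_mem_setF {m : ℕ} (hm : 0 < m) (hjm : j < m) :
    ((m : ℕ) : ZMod (2*m)) ∉ setF (2*m) j := by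
  rw [mem_setF]
  rintro (⟨i, h1, h2, h3⟩ | ⟨i, h1, h2, h3⟩)
  · have hiv : ((i : ZMod (2*m))).val = i := ZMod.val_cast_of_lt (by omega)
    have hmv : (((m:ℕ) : ZMod (2*m))).val = m := ZMod.val_cast_of_lt (by omega)
    rw [h3] at hiv
    omega
  · have : ((i + m : ℕ) : ZMod (2*m)) = 0 := by
      push_cast
      rw [← h3]; ring
    have := Nat.le_of_dvd (by omega) ((natCast_eq_zero_iff (N := 2*m) _).mp this)
    omega

-- the even-regular circulant graph
def circ (N j : ℕ) : SimpleGraph (ZMod N) where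
  Adj a b := a ≠ b ∧ b - a ∈ setF N j
  symm := by
    constructor
    rintro a b ⟨hne, hmem⟩
    refine ⟨hne.symm, ?_⟩
    have := neg_mem_setF hmem
    simpa [neg_sub] using this
  loopless := ⟨fun a h => h.1 rfl⟩

lemma circ_neighborSet (hj : 2 * j < N) (a : ZMod N) :
    (circ N j).neighborSet a = (fun d => a + d) '' ↑(setF N j) := by
  ext b
  simp only [SimpleGraph.mem_neighborSet, circ, Set.mem_image, Finset.coe_sort_coe,
    Finset.mem_coe]
  constructor
  · rintro ⟨hne, hmem⟩
    exact ⟨b - a, hmem, by ring⟩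
  · rintro ⟨d, hd, rfl⟩
    have hd0 : d ≠ 0 := fun h => zero_not_mem_setF hj (h ▸ hd)
    refine ⟨fun h => hd0 ?_, by simpa using hd⟩
    · have := congrArg (fun x => x - a) h
      simpa using this.symm

lemma circ_deg (hj : 2 * j < N) (a : ZMod N) :
    Nat.card ((circ N j).neighborSet a) = 2 * j := by
  rw [circ_neighborSet hj, Nat.card_coe_set_eq,
    Set.ncard_image_of_injective _ (add_right_injective a),
    Set.ncard_coe_finset, card_setF hj]

-- the "marked pairs" predicate
def pp (m r : ℕ) (a : ZMod (2*m)) : Prop :=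
  a.val < r ∨ (m ≤ a.val ∧ a.val < m + r)

lemma neg_m_eq {m : ℕ} : -((m:ℕ) : ZMod (2*m)) = ((m:ℕ) : ZMod (2*m)) := by
  have : ((m:ℕ) : ZMod (2*m)) + ((m:ℕ) : ZMod (2*m)) = 0 := by
    rw [← Nat.cast_add, ← two_mul, ZMod.natCast_self]
  exact neg_eq_of_add_eq_zero_left this

lemma pp_add_m {m r : ℕ} (hm : 0 < m) (hr : r ≤ m) (a : ZMod (2*m)) :
    pp m r (a + ((m:ℕ) : ZMod (2*m))) ↔ pp m r a := by
  haveI : NeZero (2*m) := ⟨by omega⟩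
  have hx : a.val < 2*m := ZMod.val_lt a
  have hmv : (((m:ℕ) : ZMod (2*m))).val = m := ZMod.val_cast_of_lt (by omega)
  have hadd : (a + ((m:ℕ) : ZMod (2*m))).val = (a.val + m) % (2*m) := by
    rw [ZMod.val_add, hmv]
  unfold pp
  rw [hadd]
  rcases lt_or_ge a.val m with h | h
  · rw [Nat.mod_eq_of_lt (by omega)]
    omega
  · rw [Nat.mod_eq_sub_mod (by omega), Nat.mod_eq_of_lt (by omega)]
    omega

instance (m r : ℕ) (a : ZMod (2*m)) : Decidable (pp m r a) := by
  unfold pp; infer_instance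

-- graph: n-1 = 2m vertices of degree k = 2j+1, one of degree l = 2r
def gOdd (m j r : ℕ) : SimpleGraph (ZMod (2*m) ⊕ Unit) where
  Adj x y := match x, y with
    | .inl a, .inl b => (a ≠ b ∧ b - a ∈ setF (2*m) j) ∨
        (b - a = ((m:ℕ) : ZMod (2*m)) ∧ a ≠ b ∧ ¬ pp m r a ∧ ¬ pp m r b)
    | .inl a, .inr _ => pp m r a
    | .inr _, .inl a => pp m r a
    | .inr _, .inr _ => False
  symm := by
    constructor
    rintro (a | u) (b | v) h
    · rcases h with ⟨hne, hmem⟩ | ⟨he, hne, ha, hb⟩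
      · refine Or.inl ⟨hne.symm, ?_⟩
        have := neg_mem_setF hmem
        simpa [neg_sub] using this
      · refine Or.inr ⟨?_, hne.symm, hb, ha⟩
        have : a - b = -(b - a) := by ring
        rw [this, he, neg_m_eq]
    · exact h
    · exact h
    · exact h.elim
  loopless := by
    constructor
    rintro (a | u) h
    · rcases h with ⟨hne, -⟩ | ⟨-, hne, -⟩ <;> exact hne rfl
    · exact h.elim

lemma ncard_sum_set {A B : Type*} [Finite A] [Finite B] (s : Set (A ⊕ B)) :
    s.ncard = (Sum.inl ⁻¹' s).ncard + (Sum.inr ⁻¹' s).ncard := by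
  have hdec : s = Sum.inl '' (Sum.inl ⁻¹' s) ∪ Sum.inr '' (Sum.inr ⁻¹' s) := by
    ext (a | b) <;> simp
  have hdisj : Disjoint (Sum.inl '' (Sum.inl ⁻¹' s)) (Sum.inr '' (Sum.inr ⁻¹' s)) := by
    rw [Set.disjoint_left]
    rintro x ⟨a, -, rfl⟩ ⟨b, -, h⟩
    simp at h
  conv_lhs => rw [hdec]
  rw [Set.ncard_union_eq hdisj (Set.toFinite _) (Set.toFinite _),
    Set.ncard_image_of_injective _ Sum.inl_injective,
    Set.ncard_image_of_injective _ Sum.inr_injective]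

variable {m j r : ℕ}

lemma gOdd_pre_inr (a : ZMod (2*m)) :
    Sum.inr ⁻¹' ((gOdd m j r).neighborSet (Sum.inl a)) = {u : Unit | pp m r a} := by
  ext u
  simp only [Set.mem_preimage, SimpleGraph.mem_neighborSet, Set.mem_setOf_eq]
  rfl

lemma gOdd_pre_inl_pos (hj : 2*j < 2*m) {a : ZMod (2*m)} (hP : pp m r a) :
    Sum.inl ⁻¹' ((gOdd m j r).neighborSet (Sum.inl a)) =
      (fun d => a + d) '' ↑(setF (2*m) j) := by
  ext b
  simp only [Set.mem_preimage, SimpleGraph.mem_neighborSet, Set.mem_image, Finset.mem_coe]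
  constructor
  · rintro (⟨hne, hmem⟩ | ⟨-, -, ha, -⟩)
    · exact ⟨b - a, hmem, by ring⟩
    · exact absurd hP ha
  · rintro ⟨d, hd, rfl⟩
    have hd0 : d ≠ 0 := fun h => zero_not_mem_setF hj (h ▸ hd)
    refine Or.inl ⟨fun h => hd0 ?_, by simpa using hd⟩
    have := congrArg (fun x => x - a) h
    simpa using this.symm

lemma gOdd_pre_inl_neg (hm : 0 < m) (hjm : j < m) (hr : r ≤ m) {a : ZMod (2*m)}
    (hP : ¬ pp m r a) :
    Sum.inl ⁻¹' ((gOdd m j r).neighborSet (Sum.inl a)) =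
      (fun d => a + d) '' ↑(setF (2*m) j) ∪ {a + ((m:ℕ) : ZMod (2*m))} := by
  have hj : 2*j < 2*m := by omega
  ext b
  simp only [Set.mem_preimage, SimpleGraph.mem_neighborSet, Set.mem_union, Set.mem_image,
    Finset.mem_coe, Set.mem_singleton_iff]
  constructor
  · rintro (⟨hne, hmem⟩ | ⟨he, -, -, -⟩)
    · exact Or.inl ⟨b - a, hmem, by ring⟩
    · exact Or.inr (by rw [← he]; ring)
  · rintro (⟨d, hd, rfl⟩ | rfl)
    · have hd0 : d ≠ 0 := fun h => zero_not_mem_setF hj (h ▸ hd)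
      refine Or.inl ⟨fun h => hd0 ?_, by simpa using hd⟩
      have := congrArg (fun x => x - a) h
      simpa using this.symm
    · have hm0 : ((m:ℕ) : ZMod (2*m)) ≠ 0 := by
        rw [Ne, natCast_eq_zero_iff]
        intro h
        have := Nat.le_of_dvd (by omega) h
        omega
      refine Or.inr ⟨by ring, fun h => hm0 ?_, hP, ?_⟩
      · have := congrArg (fun x => x - a) h
        simpa using this.symm
      · rw [pp_add_m hm hr]
        exact hP

lemma gOdd_deg_inl (hm : 0 < m) (hjm : j < m) (hr : r ≤ m) (a : ZMod (2*m)) :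
    Nat.card ((gOdd m j r).neighborSet (Sum.inl a)) = 2*j + 1 := by
  haveI : NeZero (2*m) := ⟨by omega⟩
  have hj : 2*j < 2*m := by omega
  rw [Nat.card_coe_set_eq, ncard_sum_set]
  by_cases hP : pp m r a
  · rw [gOdd_pre_inl_pos hj hP, gOdd_pre_inr,
      Set.ncard_image_of_injective _ (add_right_injective a), Set.ncard_coe_finset,
      card_setF hj]
    have : {u : Unit | pp m r a} = Set.univ := by
      ext u; simp [hP]
    rw [this, Set.ncard_univ]
    simp
  · rw [gOdd_pre_inl_neg hm hjm hr hP, gOdd_pre_inr]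
    have hdisj : Disjoint ((fun d => a + d) '' ↑(setF (2*m) j)) {a + ((m:ℕ) : ZMod (2*m))} := by
      rw [Set.disjoint_singleton_right]
      rintro ⟨d, hd, he⟩
      have : d = ((m:ℕ) : ZMod (2*m)) := by
        have := congrArg (fun x => x - a) he
        simpa using this
      exact m_not_mem_setF hm hjm (this ▸ hd)
    rw [Set.ncard_union_eq hdisj (Set.toFinite _) (Set.toFinite _),
      Set.ncard_image_of_injective _ (add_right_injective a), Set.ncard_coe_finset,
      card_setF hj, Set.ncard_singleton]
    have : {u : Unit | pp m r a} = ∅ := by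
      ext u; simp [hP]
    rw [this, Set.ncard_empty]

lemma gOdd_deg_inr (hm : 0 < m) (hr : r ≤ m) (u : Unit) :
    Nat.card ((gOdd m j r).neighborSet (Sum.inr u)) = 2*r := by
  haveI : NeZero (2*m) := ⟨by omega⟩
  rw [Nat.card_coe_set_eq, ncard_sum_set]
  have h1 : Sum.inl ⁻¹' ((gOdd m j r).neighborSet (Sum.inr u)) =
      (fun i : ℕ => (i : ZMod (2*m))) '' ↑(Finset.range r ∪ Finset.Ico m (m+r)) := by
    ext a
    simp only [Set.mem_preimage, SimpleGraph.mem_neighborSet, Set.mem_image, Finset.coe_union,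
      Set.mem_union, Finset.mem_coe, Finset.mem_range, Finset.mem_Ico]
    constructor
    · intro hP
      rcases hP with h | ⟨h1, h2⟩
      · exact ⟨a.val, Or.inl h, ZMod.natCast_rightInverse a⟩
      · exact ⟨a.val, Or.inr ⟨h1, h2⟩, ZMod.natCast_rightInverse a⟩
    · rintro ⟨i, hi, rfl⟩
      have hiv : ((i : ZMod (2*m))).val = i := ZMod.val_cast_of_lt (by omega)
      show pp m r _
      unfold pp
      rw [hiv]
      omega
  have h2 : Sum.inr ⁻¹' ((gOdd m j r).neighborSet (Sum.inr u)) = ∅ := by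
    ext v
    simp only [Set.mem_preimage, SimpleGraph.mem_neighborSet, Set.mem_empty_iff_false,
      iff_false]
    exact fun h => h
  rw [h1, h2, Set.ncard_empty]
  have hinj : Set.InjOn (fun i : ℕ => (i : ZMod (2*m))) ↑(Finset.range r ∪ Finset.Ico m (m+r)) := by
    intro x hx y hy hxy
    simp only [Finset.coe_union, Set.mem_union, Finset.mem_coe, Finset.mem_range,
      Finset.mem_Ico] at hx hy
    have hxv : ((x : ZMod (2*m))).val = x := ZMod.val_cast_of_lt (by omega)
    have hyv : ((y : ZMod (2*m))).val = y := ZMod.val_cast_of_lt (by omega)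
    simpa [hxv, hyv] using congrArg ZMod.val hxy
  rw [Set.ncard_image_of_injOn hinj, Set.ncard_coe_finset,
    Finset.card_union_of_disjoint (by
      rw [Finset.disjoint_left]
      intro x hx hx2
      simp only [Finset.mem_range] at hx
      simp only [Finset.mem_Ico] at hx2
      omega)]
  rw [Finset.card_range, Nat.card_Ico]
  omega

-- Section E: counting helpers and existence of the extremal graphs
lemma natCard_subtype_of_forall {α : Type*} (p : α → Prop) (h : ∀ a, p a) :
    Nat.card {a // p a} = Nat.card α :=
  Nat.card_congr (Equiv.subtypeUnivEquiv h)

lemma natCard_subtype_of_forall_not {α : Type*} (p : α → Prop) (h : ∀ a, ¬ p a) :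
    Nat.card {a // p a} = 0 := by
  haveI : IsEmpty {a // p a} := ⟨fun x => h x.1 x.2⟩
  exact Nat.card_of_isEmpty

lemma natCard_subtype_sum {A B : Type*} [Finite A] [Finite B] (p : A ⊕ B → Prop) :
    Nat.card {x // p x} = Nat.card {a // p (.inl a)} + Nat.card {b // p (.inr b)} := by
  rw [Nat.card_congr (Equiv.subtypeSum (p := p)), Nat.card_sum]

lemma exists_graph_even {n : ℕ} (hn : 0 < n) (l : Fin n) (hl : Even (l : ℕ)) :
    ∃ g : SimpleGraph (Fin n), dkVec g = fun i => if i = l then (n : ℝ) else 0 := by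
  obtain ⟨j, hj⟩ := hl
  have hj2 : 2 * j < n := by have := l.isLt; omega
  haveI : NeZero n := ⟨by omega⟩
  have hcard : Fintype.card (Fin n) = Fintype.card (ZMod n) := by simp [ZMod.card]
  let e : Fin n ≃ ZMod n := Fintype.equivOfCardEq hcard
  refine ⟨SimpleGraph.comap (⇑e) (circ n j), ?_⟩
  funext i
  rw [dkVec, dkNk_comap]
  by_cases hi : i = l
  · subst hi
    rw [if_pos rfl]
    have hall : ∀ w : ZMod n, Nat.card ((circ n j).neighborSet w) = (i : ℕ) := fun w => by
      rw [circ_deg hj2]; omega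
    rw [natCard_subtype_of_forall _ hall, Nat.card_zmod]
  · rw [if_neg hi]
    have hne : (i : ℕ) ≠ 2 * j := by
      intro h
      exact hi (Fin.ext (by omega))
    have hnone : ∀ w : ZMod n, ¬ (Nat.card ((circ n j).neighborSet w) = (i : ℕ)) := fun w => by
      rw [circ_deg hj2]; omega
    rw [natCard_subtype_of_forall_not _ hnone]
    simp

lemma exists_graph_odd {n : ℕ} (hn : Odd n) (k l : Fin n) (hk : Odd (k : ℕ))
    (hl : Even (l : ℕ)) :
    ∃ g : SimpleGraph (Fin n),
      dkVec g = fun i => if i = k then (n : ℝ) - 1 else if i = l then 1 else 0 := by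
  obtain ⟨c, hc⟩ := hn
  obtain ⟨j', hj'⟩ := hk
  obtain ⟨r', hr'⟩ := hl
  have hkl : k.1 < n := k.isLt
  have hll : l.1 < n := l.isLt
  have hm : 0 < c := by omega
  have hjm : j' < c := by omega
  have hrm : r' ≤ c := by omega
  haveI : NeZero (2 * c) := ⟨by omega⟩
  have hcard : Fintype.card (Fin n) = Fintype.card (ZMod (2 * c) ⊕ Unit) := by
    simp [ZMod.card]; omega
  let e : Fin n ≃ (ZMod (2 * c) ⊕ Unit) := Fintype.equivOfCardEq hcard
  refine ⟨SimpleGraph.comap (⇑e) (gOdd c j' r'), ?_⟩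
  have hnR : (n : ℝ) = 2 * (c : ℝ) + 1 := by
    rw [hc]; push_cast; ring
  funext i
  rw [dkVec, dkNk_comap, natCard_subtype_sum]
  by_cases hik : i = k
  · subst hik
    rw [if_pos rfl]
    have h1 : ∀ a : ZMod (2 * c),
        Nat.card ((gOdd c j' r').neighborSet (Sum.inl a)) = (i : ℕ) := fun a => by
      rw [gOdd_deg_inl hm hjm hrm]; omega
    have h2 : ∀ u : Unit,
        ¬ (Nat.card ((gOdd c j' r').neighborSet (Sum.inr u)) = (i : ℕ)) := fun u => by
      rw [gOdd_deg_inr hm hrm]; omega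
    rw [natCard_subtype_of_forall _ h1, natCard_subtype_of_forall_not _ h2, Nat.card_zmod]
    push_cast
    rw [hnR]; ring
  · rw [if_neg hik]
    have hik' : (i : ℕ) ≠ 2 * j' + 1 := fun h => hik (Fin.ext (by omega))
    have h1 : ∀ a : ZMod (2 * c),
        ¬ (Nat.card ((gOdd c j' r').neighborSet (Sum.inl a)) = (i : ℕ)) := fun a => by
      rw [gOdd_deg_inl hm hjm hrm]; omega
    rw [natCard_subtype_of_forall_not _ h1]
    by_cases hil : i = l
    · subst hil
      rw [if_pos rfl]
      have h2 : ∀ u : Unit,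
          Nat.card ((gOdd c j' r').neighborSet (Sum.inr u)) = (i : ℕ) := fun u => by
        rw [gOdd_deg_inr hm hrm]; omega
      rw [natCard_subtype_of_forall _ h2]
      simp
    · rw [if_neg hil]
      have hil' : (i : ℕ) ≠ 2 * r' := fun h => hil (Fin.ext (by omega))
      have h2 : ∀ u : Unit,
          ¬ (Nat.card ((gOdd c j' r').neighborSet (Sum.inr u)) = (i : ℕ)) := fun u => by
        rw [gOdd_deg_inr hm hrm]; omega
      rw [natCard_subtype_of_forall_not _ h2]
      simp

-- Section F
variable {n : ℕ}

def QSet (n : ℕ) : Set (Fin n → ℝ) :=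
  {x | (∀ i, 0 ≤ x i) ∧ (∑ i, x i = n) ∧
    (∑ i ∈ univ.filter (fun i : Fin n => Odd (i : ℕ)), x i ≤ (n : ℝ) - 1)}

lemma convex_QSet : Convex ℝ (QSet n) := by
  rintro x ⟨hx0, hx1, hx2⟩ y ⟨hy0, hy1, hy2⟩ a b ha hb hab
  refine ⟨fun i => ?_, ?_, ?_⟩
  · have := hx0 i; have := hy0 i
    simp only [Pi.add_apply, Pi.smul_apply, smul_eq_mul]
    nlinarith
  · simp only [Pi.add_apply, Pi.smul_apply, smul_eq_mul]
    rw [Finset.sum_add_distrib, ← Finset.mul_sum, ← Finset.mul_sum, hx1, hy1]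
    nlinarith
  · simp only [Pi.add_apply, Pi.smul_apply, smul_eq_mul]
    rw [Finset.sum_add_distrib, ← Finset.mul_sum, ← Finset.mul_sum]
    nlinarith

lemma QSet_le_n {x : Fin n → ℝ} (hx : x ∈ QSet n) (i : Fin n) : x i ≤ n := by
  obtain ⟨h0, h1, -⟩ := hx
  calc x i ≤ ∑ j, x j := Finset.single_le_sum (fun j _ => h0 j) (mem_univ i)
  _ = n := h1

lemma QSet_odd_le {x : Fin n → ℝ} (hx : x ∈ QSet n) {i : Fin n} (hi : Odd (i : ℕ)) :
    x i ≤ (n : ℝ) - 1 := by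
  obtain ⟨h0, -, h2⟩ := hx
  calc x i ≤ ∑ j ∈ univ.filter (fun j : Fin n => Odd (j : ℕ)), x j :=
        Finset.single_le_sum (fun j _ => h0 j) (by simp [hi])
  _ ≤ (n : ℝ) - 1 := h2

lemma QSet_pair_le {x : Fin n → ℝ} (hx : x ∈ QSet n) {k l : Fin n} (hk : x k = (n : ℝ) - 1)
    (hne : l ≠ k) : x l ≤ 1 := by
  obtain ⟨h0, h1, -⟩ := hx
  have hsub : ({l, k} : Finset (Fin n)) ⊆ univ := Finset.subset_univ _
  have := Finset.sum_le_sum_of_subset_of_nonneg hsub (fun i _ _ => h0 i)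
  rw [Finset.sum_pair hne, h1, hk] at this
  linarith

lemma QSet_forces_one {x : Fin n → ℝ} (hx : x ∈ QSet n) {l : Fin n} (hl : x l = n) :
    x = fun i => if i = l then (n : ℝ) else 0 := by
  obtain ⟨h0, h1, -⟩ := hx
  have herase := Finset.add_sum_erase univ x (mem_univ l)
  have hz : ∑ i ∈ univ.erase l, x i = 0 := by rw [h1] at herase; linarith
  have hall := (Finset.sum_eq_zero_iff_of_nonneg (fun j _ => h0 j)).mp hz
  funext i
  by_cases h : i = l
  · subst h; simpa using hl
  · simpa [h] using hall i (Finset.mem_erase.mpr ⟨h, mem_univ i⟩)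

lemma QSet_forces_two {x : Fin n → ℝ} (hx : x ∈ QSet n) {k l : Fin n}
    (hk : x k = (n : ℝ) - 1) (hl : x l = 1) (hne : k ≠ l) :
    x = fun i => if i = k then (n : ℝ) - 1 else if i = l then 1 else 0 := by
  obtain ⟨h0, h1, -⟩ := hx
  have h2 := Finset.add_sum_erase univ x (mem_univ k)
  have hlk : l ∈ univ.erase k := Finset.mem_erase.mpr ⟨hne.symm, mem_univ l⟩
  have h3 := Finset.add_sum_erase (univ.erase k) x hlk
  have hz : ∑ i ∈ (univ.erase k).erase l, x i = 0 := by
    rw [h1] at h2; linarith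
  have hall := (Finset.sum_eq_zero_iff_of_nonneg (fun j _ => h0 j)).mp hz
  funext i
  by_cases hik : i = k
  · subst hik; simpa using hk
  · by_cases hil : i = l
    · subst hil; simp [hne.symm] at *; simpa [hik] using hl
    · have : i ∈ (univ.erase k).erase l :=
        Finset.mem_erase.mpr ⟨hil, Finset.mem_erase.mpr ⟨hik, mem_univ i⟩⟩
      simpa [hik, hil] using hall i this

lemma combo_eq {a b u v c : ℝ} (ha : 0 < a) (hb : 0 < b) (hab : a + b = 1)
    (hu : u ≤ c) (hv : v ≤ c) (h : a * u + b * v = c) : u = c ∧ v = c := by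
  have key : a * (c - u) + b * (c - v) = 0 := by linear_combination c * hab - h
  have h1 : 0 ≤ a * (c - u) := mul_nonneg ha.le (by linarith)
  have h2 : 0 ≤ b * (c - v) := mul_nonneg hb.le (by linarith)
  have e1 : a * (c - u) = 0 := by linarith
  have e2 : b * (c - v) = 0 := by linarith
  constructor
  · rcases mul_eq_zero.mp e1 with h | h
    · linarith
    · linarith
  · rcases mul_eq_zero.mp e2 with h | h
    · linarith
    · linarith

def LSet (n : ℕ) : Set (Fin n → ℝ) :=
  {x : Fin n → ℝ | ∃ l : Fin n, Even (l : ℕ) ∧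
      x = fun i => if i = l then (n : ℝ) else 0} ∪
  {x : Fin n → ℝ | ∃ k l : Fin n, Odd (k : ℕ) ∧ Even (l : ℕ) ∧
      x = fun i => if i = k then ((n : ℝ) - 1) else if i = l then 1 else 0}

lemma QSet_subset_hull (hn : 0 < n) : QSet n ⊆ convexHull ℝ (LSet n) := by
  rintro x ⟨h0, h1, h2⟩
  classical
  set E : Finset (Fin n) := univ.filter (fun i : Fin n => ¬ Odd (i : ℕ)) with hE
  set O : Finset (Fin n) := univ.filter (fun i : Fin n => Odd (i : ℕ)) with hO
  set s : ℝ := ∑ i ∈ O, x i with hs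
  have hs0 : 0 ≤ s := Finset.sum_nonneg (fun i _ => h0 i)
  have hsn : s ≤ (n : ℝ) - 1 := h2
  have hnR : 1 ≤ (n : ℝ) := by exact_mod_cast hn
  have hn0 : (n : ℝ) ≠ 0 := by linarith
  have hEsum : ∑ i ∈ E, x i = (n : ℝ) - s := by
    have h := Finset.sum_filter_add_sum_filter_not univ (fun i : Fin n => Odd (i : ℕ)) x
    rw [h1] at h
    rw [← hO, ← hE] at h
    linarith
  set A : ℝ := (n : ℝ) - s with hA
  have hA1 : 1 ≤ A := by rw [hA]; linarith
  have hA0 : A ≠ 0 := by linarith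
  set τ : ℝ := s / ((n : ℝ) - 1) with hτ
  have hτ0 : 0 ≤ τ := div_nonneg hs0 (by linarith)
  have hts : τ * ((n : ℝ) - 1) = s := by
    rcases eq_or_ne ((n : ℝ) - 1) 0 with h | h
    · have hs' : s = 0 := le_antisymm (by linarith [hsn, h]) hs0
      rw [hτ, hs', h]
      simp
    · rw [hτ]; exact div_mul_cancel₀ s h
  have hτ1 : τ ≤ 1 := by
    rcases eq_or_ne ((n : ℝ) - 1) 0 with h | h
    · have hs' : s = 0 := le_antisymm (by linarith [hsn]) hs0
      rw [hτ, hs']; simp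
    · have hu0 : 0 < (n : ℝ) - 1 := lt_of_le_of_ne (by linarith) (Ne.symm h)
      rw [hτ, div_le_one hu0]; exact hsn
  have hτA : τ / A ≤ 1 := by
    have h1' : τ / A ≤ τ := div_le_self hτ0 hA1
    linarith
  have hτA0 : 0 ≤ τ / A := div_nonneg hτ0 (by linarith)
  let w : (Fin n ⊕ Fin n × Fin n) → ℝ :=
    Sum.elim (fun l => x l * (1 - τ / A) / n) (fun p => x p.1 * x p.2 / (((n : ℝ) - 1) * A))
  let z : (Fin n ⊕ Fin n × Fin n) → (Fin n → ℝ) :=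
    Sum.elim (fun l => fun i => if i = l then (n : ℝ) else 0)
      (fun p => fun i => if i = p.1 then (n : ℝ) - 1 else if i = p.2 then 1 else 0)
  let T : Finset (Fin n ⊕ Fin n × Fin n) :=
    E.map ⟨Sum.inl, Sum.inl_injective⟩ ∪ (O ×ˢ E).map ⟨Sum.inr, Sum.inr_injective⟩
  have hdisjT : Disjoint (E.map ⟨Sum.inl, Sum.inl_injective⟩)
      ((O ×ˢ E).map ⟨Sum.inr, Sum.inr_injective⟩) := by
    rw [Finset.disjoint_left]
    rintro a ha hb
    simp only [Finset.mem_map, Function.Embedding.coeFn_mk] at ha hb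
    obtain ⟨_, _, rfl⟩ := ha
    obtain ⟨_, _, h⟩ := hb
    exact absurd h (by simp)
  have hw0 : ∀ i ∈ T, 0 ≤ w i := by
    rintro (l | p) _
    · exact div_nonneg (mul_nonneg (h0 l) (by linarith)) (by linarith)
    · exact div_nonneg (mul_nonneg (h0 p.1) (h0 p.2)) (mul_nonneg (by linarith) (by linarith))
  have hsum1 : ∑ i ∈ E.map ⟨Sum.inl, Sum.inl_injective⟩, w i = A * (1 - τ / A) / n := by
    rw [Finset.sum_map]
    simp only [Function.Embedding.coeFn_mk, Sum.elim_inl, w]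
    rw [← Finset.sum_div, ← Finset.sum_mul, hEsum]
  have hsum2 : ∑ i ∈ (O ×ˢ E).map ⟨Sum.inr, Sum.inr_injective⟩, w i
      = s * A / (((n : ℝ) - 1) * A) := by
    rw [Finset.sum_map]
    simp only [Function.Embedding.coeFn_mk, Sum.elim_inr, w]
    rw [Finset.sum_product]
    have hin : ∀ k, ∑ l ∈ E, x k * x l / (((n : ℝ) - 1) * A) = x k * A / (((n : ℝ) - 1) * A) :=
      fun k => by rw [← Finset.sum_div, ← Finset.mul_sum, hEsum]
    rw [Finset.sum_congr rfl (fun k _ => hin k), ← Finset.sum_div, ← Finset.sum_mul]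
  have hwsum : ∑ i ∈ T, w i = 1 := by
    rw [Finset.sum_union hdisjT, hsum1, hsum2]
    rw [mul_div_mul_right _ _ hA0]
    have eA : A * (1 - τ / A) = A - τ := by field_simp
    rw [eA, ← hτ]
    rw [div_add' _ _ _ hn0, div_eq_one_iff_eq hn0]
    have hr : τ * ((n : ℝ) - 1) = τ * n - τ := by ring
    rw [hτ] at hts ⊢
    linarith [hts, hr]
  have hzL : ∀ i ∈ T, z i ∈ LSet n := by
    rintro (l | p) hi
    · have hl : l ∈ E := by
        simp only [T, Finset.mem_union, Finset.mem_map, Function.Embedding.coeFn_mk] at hi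
        rcases hi with ⟨l', hl', he⟩ | ⟨p', _, he⟩
        · rwa [← Sum.inl_injective he]
        · simp at he
      rw [hE] at hl
      simp only [Finset.mem_filter] at hl
      exact Or.inl ⟨l, Nat.not_odd_iff_even.mp hl.2, rfl⟩
    · have hp : p ∈ O ×ˢ E := by
        simp only [T, Finset.mem_union, Finset.mem_map, Function.Embedding.coeFn_mk] at hi
        rcases hi with ⟨l', _, he⟩ | ⟨p', hp', he⟩
        · simp at he
        · rwa [← Sum.inr_injective he]
      rw [Finset.mem_product] at hp
      obtain ⟨hpk, hpl⟩ := hp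
      rw [hO] at hpk
      rw [hE] at hpl
      simp only [Finset.mem_filter] at hpk hpl
      exact Or.inr ⟨p.1, p.2, hpk.2, Nat.not_odd_iff_even.mp hpl.2, rfl⟩
  have hmass : T.centerMass w z = x := by
    rw [Finset.centerMass_eq_of_sum_1 _ z hwsum]
    funext idx
    rw [Finset.sum_apply]
    rw [Finset.sum_union hdisjT, Finset.sum_map, Finset.sum_map]
    simp only [Function.Embedding.coeFn_mk, Pi.smul_apply, smul_eq_mul, Sum.elim_inl,
      Sum.elim_inr, w, z]
    rw [Finset.sum_product]
    by_cases hodd : Odd (idx : ℕ)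
    · have hidxE : idx ∉ E := by rw [hE]; simp [hodd]
      have hidxO : idx ∈ O := by rw [hO]; simp [hodd]
      have hn2 : 2 ≤ n := by
        rcases hodd with ⟨c, hc⟩
        have := idx.isLt
        omega
      have hu0 : (0 : ℝ) < (n : ℝ) - 1 := by
        have : (2 : ℝ) ≤ n := by exact_mod_cast hn2
        linarith
      have hfirst : ∑ l ∈ E, x l * (1 - τ / A) / ↑n * (if idx = l then (n : ℝ) else 0) = 0 := by
        apply Finset.sum_eq_zero
        intro l hl
        have : idx ≠ l := fun h => hidxE (h ▸ hl)
        rw [if_neg this, mul_zero]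
      rw [hfirst, zero_add]
      rw [← Finset.add_sum_erase _ _ hidxO]
      have hrest : ∑ k ∈ O.erase idx, ∑ l ∈ E,
          x k * x l / (((n : ℝ) - 1) * A) *
            (if idx = k then (n : ℝ) - 1 else if idx = l then 1 else 0) = 0 := by
        apply Finset.sum_eq_zero
        intro k hk
        apply Finset.sum_eq_zero
        intro l hl
        have hik : idx ≠ k := fun h => ((Finset.mem_erase.mp hk).1 h.symm).elim
        have hil : idx ≠ l := fun h => hidxE (h ▸ hl)
        rw [if_neg hik, if_neg hil, mul_zero]
      rw [hrest, add_zero]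
      have hterm : ∑ l ∈ E, x idx * x l / (((n : ℝ) - 1) * A) *
          (if idx = idx then (n : ℝ) - 1 else if idx = l then 1 else 0) = x idx := by
        have : ∀ l ∈ E, x idx * x l / (((n : ℝ) - 1) * A) *
            (if idx = idx then (n : ℝ) - 1 else if idx = l then 1 else 0)
            = (x idx * ((n : ℝ) - 1) / (((n : ℝ) - 1) * A)) * x l := by
          intro l _
          rw [if_pos rfl]
          ring
        rw [Finset.sum_congr rfl this, ← Finset.mul_sum, hEsum]
        field_simp
      rw [hterm]
    · have hidxE : idx ∈ E := by
        rw [hE]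
        simp only [Finset.mem_filter, Finset.mem_univ, true_and]
        exact hodd
      have hfirst : ∑ l ∈ E, x l * (1 - τ / A) / ↑n * (if idx = l then (n : ℝ) else 0)
          = x idx * (1 - τ / A) := by
        have : ∀ l ∈ E, x l * (1 - τ / A) / ↑n * (if idx = l then (n : ℝ) else 0)
            = if idx = l then x l * (1 - τ / A) / ↑n * n else 0 := by
          intro l _
          split <;> simp
        rw [Finset.sum_congr rfl this, Finset.sum_ite_eq E idx, if_pos hidxE]
        field_simp
      have hsecond : ∑ k ∈ O, ∑ l ∈ E,
          x k * x l / (((n : ℝ) - 1) * A) *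
            (if idx = k then (n : ℝ) - 1 else if idx = l then 1 else 0)
          = (x idx / (((n : ℝ) - 1) * A)) * s := by
        have hinK : ∀ k ∈ O, ∑ l ∈ E,
            x k * x l / (((n : ℝ) - 1) * A) *
              (if idx = k then (n : ℝ) - 1 else if idx = l then 1 else 0)
            = (x idx / (((n : ℝ) - 1) * A)) * x k := by
          intro k hk
          have hik : idx ≠ k := by
            intro h
            rw [hO] at hk
            simp only [Finset.mem_filter] at hk
            exact hodd (h ▸ hk.2)
          have : ∀ l ∈ E, x k * x l / (((n : ℝ) - 1) * A) *
              (if idx = k then (n : ℝ) - 1 else if idx = l then 1 else 0)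
              = if idx = l then x k * x l / (((n : ℝ) - 1) * A) else 0 := by
            intro l _
            rw [if_neg hik]
            split <;> simp
          rw [Finset.sum_congr rfl this, Finset.sum_ite_eq E idx, if_pos hidxE]
          ring
        rw [Finset.sum_congr rfl hinK, ← Finset.mul_sum]
      rw [hfirst, hsecond, hτ]
      have hAs : A = (n : ℝ) - s := hA
      field_simp
      ring
  have hmem := Finset.centerMass_mem_convexHull T hw0 (by rw [hwsum]; norm_num) hzL
  rwa [hmass] at hmem


/-- for `n` odd, the extreme points of the convex hull of the
degree-count vectors are exactly the `n·e_l` (`l` even) and the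
`(n-1)·e_k + e_l` (`k` odd, `l` even). -/
theorem stmt11 (n : ℕ) (hn : Odd n) :
    Set.extremePoints ℝ
        (convexHull ℝ {x : Fin n → ℝ | ∃ g : SimpleGraph (Fin n), x = dkVec g})
      = {x : Fin n → ℝ | ∃ l : Fin n, Even (l : ℕ) ∧
            x = fun i => if i = l then (n : ℝ) else 0} ∪
        {x : Fin n → ℝ | ∃ k l : Fin n, Odd (k : ℕ) ∧ Even (l : ℕ) ∧
            x = fun i => if i = k then ((n : ℝ) - 1) else if i = l then 1 else 0} := by
  classical
  have hn0 : 0 < n := hn.pos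
  set S : Set (Fin n → ℝ) := {x | ∃ g : SimpleGraph (Fin n), x = dkVec g} with hS
  show Set.extremePoints ℝ (convexHull ℝ S) = LSet n
  have hSQ : S ⊆ QSet n := by
    rintro x ⟨g, rfl⟩
    refine ⟨fun i => by simp [dkVec], ?_, ?_⟩
    · simp only [dkVec]
      rw [← Nat.cast_sum]
      exact_mod_cast congrArg (Nat.cast : ℕ → ℝ) (sum_dkNk hn0 g)
    · obtain ⟨c, hc⟩ := even_sum_dkNk_odd hn0 g
      have hle : (∑ i ∈ univ.filter (fun i : Fin n => Odd (i : ℕ)), dkNk g (i : ℕ)) ≤ n := by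
        calc (∑ i ∈ univ.filter (fun i : Fin n => Odd (i : ℕ)), dkNk g (i : ℕ))
            ≤ ∑ i : Fin n, dkNk g (i : ℕ) :=
              Finset.sum_le_sum_of_subset (Finset.filter_subset _ _)
        _ = n := sum_dkNk hn0 g
      obtain ⟨d, hd⟩ := hn
      have htle : (∑ i ∈ univ.filter (fun i : Fin n => Odd (i : ℕ)), dkNk g (i : ℕ)) ≤ n - 1 := by
        omega
      simp only [dkVec]
      rw [← Nat.cast_sum]
      calc ((∑ i ∈ univ.filter (fun i : Fin n => Odd (i : ℕ)), dkNk g (i : ℕ) : ℕ) : ℝ)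
          ≤ ((n - 1 : ℕ) : ℝ) := Nat.cast_le.mpr htle
      _ = (n : ℝ) - 1 := by
          rw [Nat.cast_sub hn0]
          simp
  have hLS : LSet n ⊆ S := by
    rintro x (⟨l, hl, rfl⟩ | ⟨k, l, hk, hl, rfl⟩)
    · obtain ⟨g, hg⟩ := exists_graph_even hn0 l hl
      exact ⟨g, hg.symm⟩
    · obtain ⟨g, hg⟩ := exists_graph_odd hn k l hk hl
      exact ⟨g, hg.symm⟩
  have hhull : convexHull ℝ S = convexHull ℝ (LSet n) :=
    le_antisymm
      (convexHull_min (hSQ.trans (QSet_subset_hull hn0)) (convex_convexHull ℝ _))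
      (convexHull_mono hLS)
  have hSQ' : convexHull ℝ S ⊆ QSet n := convexHull_min hSQ convex_QSet
  apply Set.Subset.antisymm
  · rw [hhull]
    exact extremePoints_convexHull_subset
  · intro x hx
    rw [mem_extremePoints]
    refine ⟨subset_convexHull ℝ S (hLS hx), ?_⟩
    rintro x₁ hx₁ x₂ hx₂ ⟨a, b, ha, hb, hab, hseg⟩
    have q1 := hSQ' hx₁
    have q2 := hSQ' hx₂
    rcases hx with ⟨l, hl, rfl⟩ | ⟨k, l, hk, hl, rfl⟩
    · have hcoord : a * x₁ l + b * x₂ l = n := by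
        have := congrFun hseg l
        simpa using this
      obtain ⟨e1, e2⟩ := combo_eq ha hb hab (QSet_le_n q1 l) (QSet_le_n q2 l) hcoord
      exact ⟨QSet_forces_one q1 e1, QSet_forces_one q2 e2⟩
    · have hkl : k ≠ l := by
        intro h
        rw [h] at hk
        exact (Nat.not_odd_iff_even.mpr hl) hk
      have hcoordk : a * x₁ k + b * x₂ k = (n : ℝ) - 1 := by
        have := congrFun hseg k
        simpa using this
      obtain ⟨ek1, ek2⟩ :=
        combo_eq ha hb hab (QSet_odd_le q1 hk) (QSet_odd_le q2 hk) hcoordk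
      have hcoordl : a * x₁ l + b * x₂ l = 1 := by
        have := congrFun hseg l
        simpa [Ne.symm hkl] using this
      obtain ⟨el1, el2⟩ :=
        combo_eq ha hb hab (QSet_pair_le q1 ek1 (Ne.symm hkl))
          (QSet_pair_le q2 ek2 (Ne.symm hkl)) hcoordl
      exact ⟨QSet_forces_two q1 ek1 el1 hkl, QSet_forces_two q2 ek2 el2 hkl⟩
end
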